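/- Let f_min, f_max, η^d_min be positive reals, let 0 < η^e_min ≤ η^e_max, and let κ ≥ 1. Define θ^cs = √( f_max·f_min / (κ·η^d_min·η^e_max) ) and θ^ap = θ^cs·η^d_min·η^e_min. Then max{ θ^cs·κ·η^e_max/(f_min·η^e_min), θ^ap/(f_min·η^d_min·η^e_min), f_max / min{θ^cs·η^d_min·η^e_min, θ^ap} } = √( κ·f_max·η^e_max / (f_min·η^d_min) ) · (1/η^e_min). -/

import Mathlib

/-- With the thresholds chosen in Theorem 2, the maximum of the three per-slot
ratio bounds equals √(κ·f_max·η^e_max/(f_min·η^d_min))·(1/η^e_min). -/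
theorem competitive_ratio_value (fmin fmax ηdmin ηemin ηemax κ : ℝ)
    (hfmin : 0 < fmin) (hfmax : 0 < fmax) (hηdmin : 0 < ηdmin)
    (hηemin : 0 < ηemin) (hηe : ηemin ≤ ηemax) (hκ : 1 ≤ κ) :
    let θcs := Real.sqrt (fmax * fmin / (κ * ηdmin * ηemax))
    let θap := θcs * ηdmin * ηemin
    max (θcs * κ * ηemax / (fmin * ηemin))
      (max (θap / (fmin * ηdmin * ηemin))
        (fmax / min (θcs * ηdmin * ηemin) θap)) =
      Real.sqrt (κ * fmax * ηemax / (fmin * ηdmin)) * (1 / ηemin) := by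
  intro θcs θap
  have hκ0 : (0:ℝ) < κ := lt_of_lt_of_le one_pos hκ
  have hηemax : (0:ℝ) < ηemax := lt_of_lt_of_le hηemin hηe
  have hA : (0:ℝ) < fmax * fmin / (κ * ηdmin * ηemax) := by positivity
  have hθ : 0 < θcs := Real.sqrt_pos.mpr hA
  have hθsq : θcs * θcs = fmax * fmin / (κ * ηdmin * ηemax) :=
    Real.mul_self_sqrt hA.le
  set c : ℝ := κ * ηemax / fmin with hc
  have hc0 : 0 < c := by positivity
  -- √B = θcs * c
  have hB : κ * fmax * ηemax / (fmin * ηdmin)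
      = (fmax * fmin / (κ * ηdmin * ηemax)) * (c*c) := by
    rw [hc]
    field_simp
  have hsqrtB : Real.sqrt (κ * fmax * ηemax / (fmin * ηdmin)) = θcs * c := by
    rw [hB, Real.sqrt_mul hA.le, ← Real.sqrt_mul_self hc0.le]
    simp [Real.sqrt_mul_self hc0.le]
    exact Or.inl rfl
  rw [hsqrtB]
  -- the min in the third term: both arguments are θap
  have hmin : min (θcs * ηdmin * ηemin) θap = θcs * ηdmin * ηemin := min_self _
  -- term1 = R
  have h1 : θcs * κ * ηemax / (fmin * ηemin) = θcs * c * (1/ηemin) := by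
    rw [hc]; field_simp
  -- term3 = R
  have h3 : fmax / (θcs * ηdmin * ηemin) = θcs * c * (1/ηemin) := by
    rw [div_eq_iff (by positivity)]
    have : θcs * c * (1 / ηemin) * (θcs * ηdmin * ηemin)
        = (θcs * θcs) * (c * ηdmin) := by
      field_simp
    rw [this, hθsq, hc]
    field_simp
  -- term2 ≤ R
  have h2 : θap / (fmin * ηdmin * ηemin) ≤ θcs * c * (1/ηemin) := by
    have hθap : θap / (fmin * ηdmin * ηemin) = θcs / fmin := by
      show θcs * ηdmin * ηemin / (fmin * ηdmin * ηemin) = θcs / fmin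
      field_simp
    rw [hθap, hc]
    have heq : θcs * (κ * ηemax / fmin) * (1 / ηemin) = θcs * (κ * ηemax) / (fmin * ηemin) := by
      field_simp
    rw [heq, div_le_div_iff₀ hfmin (by positivity)]
    have hke : ηemin ≤ κ * ηemax := le_trans hηe (le_mul_of_one_le_left hηemax.le hκ)
    have := mul_le_mul_of_nonneg_left hke hθ.le
    nlinarith [hθ.le, hfmin.le]
  rw [hmin, h1, h3, max_eq_right h2, max_self]
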